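/- Let n ≥ 1 be an integer and let q, β, δ, E be real numbers with δ > 0, E > 0. Let θ(·), v', g₁', g₂', F be functions such that 0 ≤ F(θ(q)) < 1. Suppose the first-order condition (1−F(θ(q)))^{n−1}·(v'(q) − (1+E·δ)·θ(q)^{E}·g₁'(q)) − β·(1+E·δ)·θ(q)^{E}·g₂'(q) = 0 holds, and that s'(q) = θ(q)^{E}·g₁'(q) + β·θ(q)^{E}·g₂'(q)/(1−F(θ(q)))^{n−1}. Then s'(q) = v'(q)/(1 + δ·E); in particular the optimal scoring rule does not depend on n or β. -/
import Mathlib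


/-- Equal-elasticity corollary of Proposition 4 (elmatters): with equal
elasticities `E_P = E_I = E`, the first-order condition
`(1−F(θ(q)))^{n−1}(v'(q) − (1+Eδ)θ(q)^E g₁'(q)) − β(1+Eδ)θ(q)^E g₂'(q) = 0`
and the scoring-rule characterization
`s'(q) = θ(q)^E g₁'(q) + β θ(q)^E g₂'(q)/(1−F(θ(q)))^{n−1}` imply
`s'(q) = v'(q)/(1 + δE)`; in particular the optimal scoring rule does not
depend on `n` or `β`. -/
theorem stmt_11
    (n : ℕ) (hn : 1 ≤ n) (q β δ E : ℝ) (hδ : 0 < δ) (hE : 0 < E)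
    (th vd g1d g2d sd F : ℝ → ℝ)
    (hF0 : 0 ≤ F (th q)) (hF1 : F (th q) < 1)
    (hFOC : (1 - F (th q)) ^ (n - 1)
        * (vd q - (1 + E * δ) * th q ^ E * g1d q)
      - β * (1 + E * δ) * th q ^ E * g2d q = 0)
    (hscore : sd q = th q ^ E * g1d q
      + β * th q ^ E * g2d q / (1 - F (th q)) ^ (n - 1)) :
    sd q = vd q / (1 + δ * E) := by
  have hP : (0:ℝ) < (1 - F (th q)) ^ (n - 1) := pow_pos (by linarith) _
  have hPne : ((1 - F (th q)) ^ (n - 1)) ≠ 0 := ne_of_gt hP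
  have hc : (1 + E * δ) ≠ 0 := by positivity
  have hc2 : (1 + δ * E) ≠ 0 := by positivity
  rw [hscore]
  field_simp
  nlinarith [hFOC, hP]
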